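/- Let H be a finite set and φ : 2^H → Φ a function into a linearly ordered set with minimum -∞, satisfying monotonicity (F ⊆ G implies φ(F) ≤ φ(G)) and locality (if F ⊆ G ⊆ H with -∞ < φ(F) = φ(G), then for all h ∈ H, φ(G) < φ(G ∪ {h}) implies φ(F) < φ(F ∪ {h})). Then for any subsets F, G ⊆ H, φ(F ∪ G) > φ(F) if and only if there exists g ∈ G such that φ(F ∪ {g}) > φ(F). -/
import Mathlib


/-- Lemma (locality consequence): for an abstract optimization program,
`φ(F ∪ G) > φ(F)` iff some `g ∈ G` has `φ(F ∪ {g}) > φ(F)`. -/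
theorem abstract_program_locality_union
    {α : Type*} [DecidableEq α] {Φ : Type*} [LinearOrder Φ] [OrderBot Φ]
    (H : Finset α) (φ : Finset α → Φ)
    (hmono : ∀ F G : Finset α, F ⊆ G → φ F ≤ φ G)
    (hloc : ∀ F G : Finset α, F ⊆ G → G ⊆ H → ⊥ < φ F → φ F = φ G →
      ∀ h ∈ H, φ G < φ (insert h G) → φ F < φ (insert h F))
    (F G : Finset α) (hF : F ⊆ H) (hG : G ⊆ H) (hfin : ⊥ < φ F) :
    φ F < φ (F ∪ G) ↔ ∃ g ∈ G, φ F < φ (insert g F) := by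
  constructor
  · intro hFG
    by_contra hcon
    push_neg at hcon
    have key : ∀ s : Finset α, s ⊆ G → φ (F ∪ s) = φ F := by
      intro s
      induction s using Finset.induction_on with
      | empty => intro _; simp
      | @insert a s ha ih =>
        intro hs'
        have hsG : s ⊆ G := fun x hx => hs' (Finset.mem_insert_of_mem hx)
        have haG : a ∈ G := hs' (Finset.mem_insert_self a s)
        have ih' := ih hsG
        have hsub : F ∪ s ⊆ H := Finset.union_subset hF (hsG.trans hG)
        have hins : φ (F ∪ insert a s) = φ (insert a (F ∪ s)) := by
          rw [Finset.union_insert]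
        rw [hins]
        rcases lt_or_ge (φ (F ∪ s)) (φ (insert a (F ∪ s))) with h | h
        · have := hloc F (F ∪ s) Finset.subset_union_left hsub hfin ih'.symm
            a (hG haG) h
          exact absurd this (not_lt.mpr (hcon a haG))
        · have h2 : φ (F ∪ s) ≤ φ (insert a (F ∪ s)) :=
            hmono _ _ (Finset.subset_insert _ _)
          rw [le_antisymm h h2]
          exact ih'
    have := key G (le_refl G)
    rw [this] at hFG
    exact lt_irrefl _ hFG
  · rintro ⟨g, hg, hlt⟩
    exact lt_of_lt_of_le hlt (hmono _ _ (Finset.insert_subset_iff.mpr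
      ⟨Finset.mem_union_right F hg, Finset.subset_union_left⟩))
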